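/- For every β > 0, the equation d²/2 = R⁽²⁾(βd)/R⁽¹⁾(βd) has exactly one solution d > 0, where R⁽¹⁾(x) = e^{x}(e^{2x} − x − 1) and R⁽²⁾(x) = ( e^{x}(e^{x} − x − 1) + (e^{x} − 1) )·(e^{x} − 1). -/

import Mathlib

open Real Filter

/-- `R⁽¹⁾(x) = e^x(e^{2x} − x − 1)`. -/
noncomputable def Rone (x : ℝ) : ℝ := exp x * (exp (2 * x) - x - 1)

/-- `R⁽²⁾(x) = (e^x(e^x − x − 1) + (e^x − 1))·(e^x − 1)`. -/
noncomputable def Rtwo (x : ℝ) : ℝ :=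
  (exp x * (exp x - x - 1) + (exp x - 1)) * (exp x - 1)

noncomputable def Rone' (x : ℝ) : ℝ :=
  exp x * (exp (2 * x) - x - 1) + exp x * (2 * exp (2 * x) - 1)

noncomputable def Rtwo' (x : ℝ) : ℝ :=
  (exp x * (exp x - x - 1) + exp x * (exp x - 1) + exp x) * (exp x - 1)
    + (exp x * (exp x - x - 1) + (exp x - 1)) * exp x

lemma cubic_le_exp {x : ℝ} (hx : 0 ≤ x) : 1 + x + x ^ 2 / 2 + x ^ 3 / 6 ≤ exp x := by
  have h := Real.sum_le_exp_of_nonneg hx 4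
  simp [Finset.sum_range_succ, Nat.factorial] at h
  linarith

lemma v_pos {x : ℝ} (hx : 0 < x) : 0 < exp x - 1 - x - x ^ 2 / 2 := by
  have h := cubic_le_exp hx.le
  nlinarith [pow_pos hx 3]

lemma exp_sub_sub_one_pos {x : ℝ} (hx : 0 < x) : 0 < exp x - x - 1 := by
  have h := v_pos hx
  nlinarith [sq_nonneg x]

lemma Rone_pos {x : ℝ} (hx : 0 < x) : 0 < Rone x := by
  unfold Rone
  have h2 := exp_sub_sub_one_pos (by linarith : (0:ℝ) < 2 * x)
  have := exp_pos x
  nlinarith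

lemma Rtwo_pos {x : ℝ} (hx : 0 < x) : 0 < Rtwo x := by
  unfold Rtwo
  have h1 := exp_sub_sub_one_pos hx
  have h2 : 0 < exp x - 1 := by nlinarith [v_pos hx, sq_nonneg x]
  have h3 : 0 < exp x := exp_pos x
  exact mul_pos (by nlinarith) h2

lemma hasDerivAt_Rone (x : ℝ) : HasDerivAt Rone (Rone' x) x := by
  have he : HasDerivAt (fun y : ℝ => exp y) (exp x) x := Real.hasDerivAt_exp x
  have h2 : HasDerivAt (fun y : ℝ => exp (2 * y)) (2 * exp (2 * x)) x := by
    have := ((hasDerivAt_id x).const_mul 2).exp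
    simpa [mul_comm] using this
  have h3 : HasDerivAt (fun y : ℝ => exp (2 * y) - y - 1)
      (2 * exp (2 * x) - 1) x := by
    simpa using (h2.sub (hasDerivAt_id x)).sub_const 1
  have := he.mul h3
  exact this

lemma hasDerivAt_Rtwo (x : ℝ) : HasDerivAt Rtwo (Rtwo' x) x := by
  have he : HasDerivAt (fun y : ℝ => exp y) (exp x) x := Real.hasDerivAt_exp x
  have h1 : HasDerivAt (fun y : ℝ => exp y - y - 1) (exp x - 1) x := by
    simpa using (he.sub (hasDerivAt_id x)).sub_const 1
  have h3 : HasDerivAt (fun y : ℝ => exp y - 1) (exp x) x := he.sub_const 1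
  have hA : HasDerivAt (fun y : ℝ => exp y * (exp y - y - 1) + (exp y - 1))
      (exp x * (exp x - x - 1) + exp x * (exp x - 1) + exp x) x := by
    exact (he.mul h1).add h3
  have := hA.mul h3
  exact this

/-- The monotone function whose level set `2β²` gives the critical points. -/
noncomputable def hh (x : ℝ) : ℝ := x ^ 2 * Rone x / Rtwo x

lemma hasDerivAt_hh {x : ℝ} (hx : 0 < x) :
    HasDerivAt hh
      (((2 * x * Rone x + x ^ 2 * Rone' x) * Rtwo x
          - x ^ 2 * Rone x * Rtwo' x) / (Rtwo x) ^ 2) x := by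
  have hnum : HasDerivAt (fun y : ℝ => y ^ 2 * Rone y)
      (2 * x * Rone x + x ^ 2 * Rone' x) x := by
    have hp : HasDerivAt (fun y : ℝ => y ^ 2) (2 * x) x := by
      simpa using hasDerivAt_pow 2 x
    exact hp.mul (hasDerivAt_Rone x)
  exact hnum.div (hasDerivAt_Rtwo x) (Rtwo_pos hx).ne'

set_option maxHeartbeats 1000000 in
lemma key_identity (x v : ℝ) (hv : v = exp x - 1 - x - x ^ 2 / 2) :
    (2 * x * Rone x + x ^ 2 * Rone' x) * Rtwo x - x ^ 2 * Rone x * Rtwo' x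
      = x * exp x * (x^3 + 5*x^4 + 8*x^5 + 6*x^6 + (5/2 : ℝ)*x^7
        + (1/2 : ℝ)*x^8 + 6*v*x^2 + 24*v*x^3 + 30*v*x^4 + (39/2 : ℝ)*v*x^5
        + 7*v*x^6 + v*x^7 + (1/8 : ℝ)*v*x^8 + 12*v^2*x + 36*v^2*x^2
        + 40*v^2*x^3 + 24*v^2*x^4 + 6*v^2*x^5 + v^2*x^6 + 8*v^3 + 22*v^3*x
        + 28*v^3*x^2 + 12*v^3*x^3 + 3*v^3*x^4 + 8*v^4 + 8*v^4*x
        + 4*v^4*x^2 + 2*v^5) := by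
  subst hv
  have h2 : exp (2 * x) = exp x * exp x := by rw [two_mul, exp_add]
  simp only [Rone, Rtwo, Rone', Rtwo', h2]
  ring

lemma key_num_pos {x : ℝ} (hx : 0 < x) :
    0 < (2 * x * Rone x + x ^ 2 * Rone' x) * Rtwo x
        - x ^ 2 * Rone x * Rtwo' x := by
  obtain ⟨v, hv⟩ : ∃ v : ℝ, v = exp x - 1 - x - x ^ 2 / 2 := ⟨_, rfl⟩
  have hvp : 0 < v := hv ▸ v_pos hx
  rw [key_identity x v hv]
  have hm : ∀ m n : ℕ, 0 ≤ v ^ m * x ^ n :=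
    fun m n => mul_nonneg (pow_nonneg hvp.le m) (pow_nonneg hx.le n)
  refine mul_pos (mul_pos hx (exp_pos x)) ?_
  nlinarith [pow_pos hx 3, hm 1 2, hm 1 3, hm 1 4, hm 1 5,
    hm 1 6, hm 1 7, hm 1 8, hm 2 1, hm 2 2, hm 2 3, hm 2 4, hm 2 5,
    hm 2 6, hm 3 0, hm 3 1, hm 3 2, hm 3 3, hm 3 4, hm 4 0, hm 4 1,
    hm 4 2, hm 5 0, hm 0 4, hm 0 5, hm 0 6, hm 0 7, hm 0 8]

lemma hh_strictMonoOn : StrictMonoOn hh (Set.Ioi 0) := by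
  refine strictMonoOn_of_deriv_pos (convex_Ioi 0)
    (fun x hx => ((hasDerivAt_hh (Set.mem_Ioi.mp hx)).continuousAt).continuousWithinAt)
    (fun x hx => ?_)
  rw [interior_Ioi] at hx
  have hx' : 0 < x := hx
  rw [(hasDerivAt_hh hx').deriv]
  exact div_pos (key_num_pos hx') (pow_pos (Rtwo_pos hx') 2)

lemma sub_identity (x v : ℝ) (hv : v = exp x - 1 - x - x ^ 2 / 2) :
    Rone x - Rtwo x
      = x + 2*x^2 + 2*x^3 + (5/4 : ℝ)*x^4 + (1/4 : ℝ)*x^5 + 2*v + 2*v*x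
        + 3*v*x^2 + v*x^3 + v^2 + v^2*x := by
  subst hv
  have h2 : exp (2 * x) = exp x * exp x := by rw [two_mul, exp_add]
  simp only [Rone, Rtwo, h2]; ring

lemma Rtwo_le_Rone {x : ℝ} (hx : 0 < x) : Rtwo x ≤ Rone x := by
  obtain ⟨v, hv⟩ : ∃ v : ℝ, v = exp x - 1 - x - x ^ 2 / 2 := ⟨_, rfl⟩
  have hvp : 0 < v := hv ▸ v_pos hx
  have hid := sub_identity x v hv
  have hm : ∀ m n : ℕ, 0 ≤ v ^ m * x ^ n :=
    fun m n => mul_nonneg (pow_nonneg hvp.le m) (pow_nonneg hx.le n)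
  nlinarith [hid, hm 1 0, hm 1 1, hm 1 2, hm 1 3, hm 2 0, hm 2 1,
    hm 0 1, hm 0 2, hm 0 3, hm 0 4, hm 0 5]

lemma ub_identity (x v : ℝ) (hv : v = exp x - 1 - x - x ^ 2 / 2) :
    2 * exp x * Rtwo x - x * Rone x
      = x^2 + 2*x^3 + (5/2 : ℝ)*x^4 + (9/4 : ℝ)*x^5 + (3/2 : ℝ)*x^6
        + (5/8 : ℝ)*x^7 + (1/8 : ℝ)*x^8 + 4*v*x + 9*v*x^2 + 10*v*x^3
        + (15/2 : ℝ)*v*x^4 + (15/4 : ℝ)*v*x^5 + v*x^6 + 4*v^2 + 11*v^2*x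
        + 12*v^2*x^2 + (15/2 : ℝ)*v^2*x^3 + 3*v^2*x^4 + 6*v^3 + 5*v^3*x
        + 4*v^3*x^2 + 2*v^4 := by
  subst hv
  have h2 : exp (2 * x) = exp x * exp x := by rw [two_mul, exp_add]
  simp only [Rone, Rtwo, h2]; ring

lemma xRone_le {x : ℝ} (hx : 0 < x) : x * Rone x ≤ 2 * exp x * Rtwo x := by
  obtain ⟨v, hv⟩ : ∃ v : ℝ, v = exp x - 1 - x - x ^ 2 / 2 := ⟨_, rfl⟩
  have hvp : 0 < v := hv ▸ v_pos hx
  have hid := ub_identity x v hv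
  have hm : ∀ m n : ℕ, 0 ≤ v ^ m * x ^ n :=
    fun m n => mul_nonneg (pow_nonneg hvp.le m) (pow_nonneg hx.le n)
  nlinarith [hid, hm 1 1, hm 1 2, hm 1 3, hm 1 4, hm 1 5, hm 1 6,
    hm 2 0, hm 2 1, hm 2 2, hm 2 3, hm 2 4, hm 3 0, hm 3 1, hm 3 2,
    hm 4 0, hm 0 2, hm 0 3, hm 0 4, hm 0 5, hm 0 6, hm 0 7, hm 0 8]

lemma hh_ge_sq {x : ℝ} (hx : 0 < x) : x ^ 2 ≤ hh x := by
  unfold hh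
  rw [le_div_iff₀ (Rtwo_pos hx)]
  nlinarith [Rtwo_le_Rone hx, sq_nonneg x]

lemma hh_le {x : ℝ} (hx : 0 < x) : hh x ≤ 2 * x * exp x := by
  unfold hh
  rw [div_le_iff₀ (Rtwo_pos hx)]
  nlinarith [xRone_le hx]

/-- For every `β > 0` the equation `d²/2 = R⁽²⁾(βd)/R⁽¹⁾(βd)` has exactly one
positive solution. -/
theorem critical_point_unique (β : ℝ) (hβ : 0 < β) :
    ∃! d : ℝ, 0 < d ∧ d ^ 2 / 2 = Rtwo (β * d) / Rone (β * d) := by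
  have hequiv : ∀ d : ℝ, 0 < d →
      ((d ^ 2 / 2 = Rtwo (β * d) / Rone (β * d)) ↔ hh (β * d) = 2 * β ^ 2) := by
    intro d hd
    have hx : 0 < β * d := mul_pos hβ hd
    have h1 := Rone_pos hx
    have h2 := Rtwo_pos hx
    unfold hh
    rw [div_eq_div_iff (by norm_num : (2:ℝ) ≠ 0) h1.ne', div_eq_iff h2.ne']
    constructor
    · intro H
      linear_combination β ^ 2 * H
    · intro H
      have hb2 : (β ^ 2 : ℝ) ≠ 0 := by positivity
      have hkey : β ^ 2 * (d ^ 2 * Rone (β * d)) = β ^ 2 * (Rtwo (β * d) * 2) := by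
        linear_combination H
      exact mul_left_cancel₀ hb2 hkey
  set a : ℝ := min 1 (β ^ 2 / 3) with ha
  set b : ℝ := max 1 (2 * β) with hb
  have hap : 0 < a := lt_min one_pos (by positivity)
  have hab : a ≤ b := le_trans (min_le_left _ _) (le_max_left _ _)
  have hbp : 0 < b := lt_of_lt_of_le hap hab
  have hcont : ContinuousOn hh (Set.Icc a b) := by
    intro y hy
    have hy' : 0 < y := lt_of_lt_of_le hap hy.1
    exact ((hasDerivAt_hh hy').continuousAt).continuousWithinAt
  have hha : hh a ≤ 2 * β ^ 2 := by
    have h1 : hh a ≤ 2 * a * exp a := hh_le hap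
    have h2 : a ≤ β ^ 2 / 3 := min_le_right _ _
    have h3 : exp a ≤ 3 := by
      calc exp a ≤ exp 1 := exp_le_exp.mpr (min_le_left _ _)
        _ ≤ 3 := by linarith [Real.exp_one_lt_d9]
    have h4 : 2 * a * exp a ≤ 2 * (β ^ 2 / 3) * 3 := by
      nlinarith [exp_pos a]
    linarith
  have hhb : 2 * β ^ 2 ≤ hh b := by
    have h1 : b ^ 2 ≤ hh b := hh_ge_sq hbp
    have h2 : 2 * β ≤ b := le_max_right _ _
    nlinarith
  obtain ⟨c, hc, hceq⟩ := intermediate_value_Icc hab hcont ⟨hha, hhb⟩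
  have hcp : 0 < c := lt_of_lt_of_le hap hc.1
  have hxc : β * (c / β) = c := by field_simp
  refine ⟨c / β, ⟨div_pos hcp hβ, ?_⟩, ?_⟩
  · rw [hequiv (c / β) (div_pos hcp hβ), hxc, hceq]
  · rintro d' ⟨hd', heq'⟩
    have h1 : hh (β * d') = 2 * β ^ 2 := (hequiv d' hd').mp heq'
    have h2 : hh (β * (c / β)) = 2 * β ^ 2 := by rw [hxc, hceq]
    have hmem1 : β * d' ∈ Set.Ioi (0:ℝ) := mul_pos hβ hd'
    have hmem2 : β * (c / β) ∈ Set.Ioi (0:ℝ) := mul_pos hβ (div_pos hcp hβ)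
    have heqx := hh_strictMonoOn.injOn hmem1 hmem2 (by rw [h1, h2])
    exact mul_left_cancel₀ hβ.ne' heqx
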